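/- For symmetric positive definite Σ₀, Σ₁ ∈ ℝⁿˣⁿ, the maximum of Tr(C) over all matrices C such that the block matrix [[Σ₀, C],[Cᵀ, Σ₁]] is positive semi-definite equals Tr((Σ₁^{1/2} Σ₀ Σ₁^{1/2})^{1/2}). -/

import Mathlib

open Matrix

section

open scoped ComplexOrder

/-- The positive semidefinite square root of a positive semidefinite matrix (removed from Mathlib;
restored with its December 2024 definition). -/
noncomputable def Matrix.PosSemidef.sqrt {n : Type*} [Fintype n] [DecidableEq n] {𝕜 : Type*}
    [RCLike 𝕜] {A : Matrix n n 𝕜} (hA : A.PosSemidef) : Matrix n n 𝕜 :=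
  hA.1.eigenvectorUnitary.1 * diagonal ((↑) ∘ (√·) ∘ hA.1.eigenvalues) *
  (star hA.1.eigenvectorUnitary : Matrix n n 𝕜)

end

section

open scoped ComplexOrder

lemma Matrix.PosSemidef.posSemidef_sqrt {n : Type*} [Fintype n] [DecidableEq n] {𝕜 : Type*}
    [RCLike 𝕜] {A : Matrix n n 𝕜} (hA : A.PosSemidef) : PosSemidef hA.sqrt := by
  apply PosSemidef.mul_mul_conjTranspose_same
  refine posSemidef_diagonal_iff.mpr fun i ↦ ?_
  rw [Function.comp_apply, RCLike.nonneg_iff]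
  constructor
  · simp only [Function.comp_apply, RCLike.ofReal_re]
    exact Real.sqrt_nonneg _
  · simp only [Function.comp_apply, RCLike.ofReal_im]

lemma Matrix.PosSemidef.sqrt_mul_self {n : Type*} [Fintype n] [DecidableEq n] {𝕜 : Type*}
    [RCLike 𝕜] {A : Matrix n n 𝕜} (hA : A.PosSemidef) : hA.sqrt * hA.sqrt = A := by
  let C : Matrix n n 𝕜 := hA.1.eigenvectorUnitary
  let E := diagonal ((↑) ∘ Real.sqrt ∘ hA.1.eigenvalues : n → 𝕜)
  suffices C * (E * (star C * C) * E) * star C = A by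
    rw [Matrix.PosSemidef.sqrt]
    simpa only [← mul_assoc] using this
  have : E * E = diagonal ((↑) ∘ hA.1.eigenvalues) := by
    rw [diagonal_mul_diagonal]
    congr! with v
    simp [← pow_two, ← RCLike.ofReal_pow, Real.sq_sqrt (hA.eigenvalues_nonneg v)]
  have hs := hA.1.spectral_theorem
  rw [Unitary.conjStarAlgAut_apply] at hs
  simpa [C, this, mul_assoc] using hs.symm

end

lemma my_trace_fromBlocks {m : Type*} [Fintype m] (A B C D : Matrix m m ℝ) :
    (Matrix.fromBlocks A B C D).trace = A.trace + D.trace := by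
  simp [Matrix.trace, Fintype.sum_sum_type, Matrix.fromBlocks]

lemma my_trace_nonneg {m : Type*} [Fintype m] [DecidableEq m] {M : Matrix m m ℝ}
    (hM : M.PosSemidef) : 0 ≤ M.trace := by
  have h : ∀ i, 0 ≤ M i i := fun i => hM.diag_nonneg
  exact Finset.sum_nonneg fun i _ => h i

set_option maxHeartbeats 1000000 in
/-- For symmetric positive definite `Σ₀, Σ₁`, the maximum of `Tr C` over matrices `C` making the
block matrix `[[Σ₀, C], [Cᵀ, Σ₁]]` positive semi-definite equals
`Tr((Σ₁^{1/2} Σ₀ Σ₁^{1/2})^{1/2})`. -/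
theorem max_trace_cross_covariance (n : ℕ)
    (S0 S1 : Matrix (Fin n) (Fin n) ℝ) (h0 : S0.PosDef) (h1 : S1.PosDef)
    (hM : (h1.posSemidef.sqrt * S0 * h1.posSemidef.sqrt).PosSemidef) :
    IsGreatest {t : ℝ | ∃ C : Matrix (Fin n) (Fin n) ℝ,
        (Matrix.fromBlocks S0 C Cᵀ S1).PosSemidef ∧ t = C.trace}
      hM.sqrt.trace := by
  classical
  set S := h1.posSemidef.sqrt with hSdef
  set T := hM.sqrt with hTdef
  set U := hM.posSemidef_sqrt.sqrt with hUdef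
  have hSS : S * S = S1 := h1.posSemidef.sqrt_mul_self
  have hTT : T * T = S * S0 * S := hM.sqrt_mul_self
  have hUU : U * U = T := hM.posSemidef_sqrt.sqrt_mul_self
  have hSsym : Sᵀ = S := by
    rw [← conjTranspose_eq_transpose_of_trivial]
    exact h1.posSemidef.posSemidef_sqrt.isHermitian
  have hTsym : Tᵀ = T := by
    rw [← conjTranspose_eq_transpose_of_trivial]
    exact hM.posSemidef_sqrt.isHermitian
  have hUsym : Uᵀ = U := by
    rw [← conjTranspose_eq_transpose_of_trivial]
    exact hM.posSemidef_sqrt.posSemidef_sqrt.isHermitian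
  have hS0sym : S0ᵀ = S0 := by
    rw [← conjTranspose_eq_transpose_of_trivial]
    exact h0.isHermitian
  -- determinants
  have hdS : IsUnit S.det := by
    have h : S.det * S.det = S1.det := by rw [← Matrix.det_mul, hSS]
    refine isUnit_iff_ne_zero.mpr fun hz => ?_
    rw [hz, zero_mul] at h
    exact h1.det_pos.ne' h.symm
  have hdT : IsUnit T.det := by
    have h : T.det * T.det = S.det * S0.det * S.det := by
      rw [← Matrix.det_mul, hTT, Matrix.det_mul, Matrix.det_mul]
    refine isUnit_iff_ne_zero.mpr fun hz => ?_
    rw [hz, zero_mul] at h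
    exact (mul_ne_zero (mul_ne_zero (isUnit_iff_ne_zero.mp hdS) h0.det_pos.ne')
      (isUnit_iff_ne_zero.mp hdS)) h.symm
  have hdU : IsUnit U.det := by
    have h : U.det * U.det = T.det := by rw [← Matrix.det_mul, hUU]
    refine isUnit_iff_ne_zero.mpr fun hz => ?_
    rw [hz, zero_mul] at h
    exact (isUnit_iff_ne_zero.mp hdT) h.symm
  -- trace identities
  have htrR : ((S * T⁻¹ * S) * S0).trace = T.trace := by
    calc ((S * T⁻¹ * S) * S0).trace
        = ((S * T⁻¹) * (S * S0)).trace :=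
          congrArg Matrix.trace (by simp only [Matrix.mul_assoc])
      _ = ((S * S0) * (S * T⁻¹)).trace := Matrix.trace_mul_comm _ _
      _ = ((S * S0 * S) * T⁻¹).trace :=
          congrArg Matrix.trace (by simp only [Matrix.mul_assoc])
      _ = ((T * T) * T⁻¹).trace := by rw [← hTT]
      _ = T.trace := by rw [Matrix.mul_nonsing_inv_cancel_right _ _ hdT]
  have htrS1 : ((S⁻¹ * T * S⁻¹) * S1).trace = T.trace := by
    have hmid : S⁻¹ * S1 * S⁻¹ = 1 := by
      rw [← hSS]
      calc S⁻¹ * (S * S) * S⁻¹ = (S⁻¹ * S) * (S * S⁻¹) := by simp only [Matrix.mul_assoc]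
        _ = 1 := by rw [Matrix.nonsing_inv_mul _ hdS, Matrix.mul_nonsing_inv _ hdS, Matrix.one_mul]
    calc ((S⁻¹ * T * S⁻¹) * S1).trace
        = ((S⁻¹ * T) * (S⁻¹ * S1)).trace :=
          congrArg Matrix.trace (by simp only [Matrix.mul_assoc])
      _ = ((S⁻¹ * S1) * (S⁻¹ * T)).trace := Matrix.trace_mul_comm _ _
      _ = ((S⁻¹ * S1 * S⁻¹) * T).trace :=
          congrArg Matrix.trace (by simp only [Matrix.mul_assoc])
      _ = T.trace := by rw [hmid, Matrix.one_mul]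
  have hRsym : (S * T⁻¹ * S)ᵀ = S * T⁻¹ * S := by
    rw [Matrix.transpose_mul, Matrix.transpose_mul, Matrix.transpose_nonsing_inv, hSsym, hTsym,
      Matrix.mul_assoc]
  have hRS0R : (S * T⁻¹ * S) * S0 * (S * T⁻¹ * S) = S1 := by
    calc (S * T⁻¹ * S) * S0 * (S * T⁻¹ * S)
        = (S * T⁻¹) * ((S * S0 * S) * (T⁻¹ * S)) := by simp only [Matrix.mul_assoc]
      _ = (S * T⁻¹) * ((T * T) * (T⁻¹ * S)) := by rw [← hTT]
      _ = S * ((T⁻¹ * T) * ((T * T⁻¹) * S)) := by simp only [Matrix.mul_assoc]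
      _ = S * S := by
          rw [Matrix.nonsing_inv_mul _ hdT, Matrix.mul_nonsing_inv _ hdT, Matrix.one_mul,
            Matrix.one_mul]
      _ = S1 := hSS
  constructor
  · -- membership
    refine ⟨S0 * (S * T⁻¹ * S), ?_, ?_⟩
    · set V := h0.posSemidef.sqrt with hVdef
      have hVV : V * V = S0 := h0.posSemidef.sqrt_mul_self
      have hVsym : Vᵀ = V := by
        rw [← conjTranspose_eq_transpose_of_trivial]
        exact h0.posSemidef.posSemidef_sqrt.isHermitian
      have h := Matrix.posSemidef_conjTranspose_mul_self
        (Matrix.fromBlocks V (V * (S * T⁻¹ * S)) (0 : Matrix (Fin n) (Fin n) ℝ) 0)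
      have hb1 : Vᴴ * V + (0 : Matrix (Fin n) (Fin n) ℝ)ᴴ * 0 = S0 := by
        simp [conjTranspose_eq_transpose_of_trivial, hVsym, hVV]
      have hb2 : Vᴴ * (V * (S * T⁻¹ * S)) + (0 : Matrix (Fin n) (Fin n) ℝ)ᴴ * 0
          = S0 * (S * T⁻¹ * S) := by
        simp only [conjTranspose_eq_transpose_of_trivial, hVsym, ← Matrix.mul_assoc, hVV]
        simp
      have hb3 : (V * (S * T⁻¹ * S))ᴴ * V + (0 : Matrix (Fin n) (Fin n) ℝ)ᴴ * 0
          = (S0 * (S * T⁻¹ * S))ᵀ := by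
        simp only [conjTranspose_eq_transpose_of_trivial, Matrix.transpose_mul, hVsym, hRsym,
          hS0sym]
        rw [Matrix.mul_assoc (S * T⁻¹ * S) V V, hVV]
        simp
      have hb4 : (V * (S * T⁻¹ * S))ᴴ * (V * (S * T⁻¹ * S)) + (0 : Matrix (Fin n) (Fin n) ℝ)ᴴ * 0
          = S1 := by
        simp only [conjTranspose_eq_transpose_of_trivial, Matrix.transpose_mul, hVsym, hRsym]
        rw [show (S * T⁻¹ * S) * V * (V * (S * T⁻¹ * S))
            = (S * T⁻¹ * S) * (V * V) * (S * T⁻¹ * S) from by simp only [Matrix.mul_assoc],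
          hVV, hRS0R]
        simp
      rw [Matrix.fromBlocks_conjTranspose, Matrix.fromBlocks_multiply, hb1, hb2, hb3, hb4] at h
      exact h
    · rw [Matrix.trace_mul_comm, htrR]
  · -- upper bound
    rintro t ⟨C, hP, rfl⟩
    have hQ := hP.mul_mul_conjTranspose_same
      (Matrix.fromBlocks (U⁻¹ * S) (-(U * S⁻¹)) (0 : Matrix (Fin n) (Fin n) ℝ) 0)
    have h0tr := my_trace_nonneg hQ
    rw [Matrix.trace_mul_cycle] at h0tr
    have hUinv : U⁻¹ * U⁻¹ = T⁻¹ := by rw [← Matrix.mul_inv_rev, hUU]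
    have hGH : (Matrix.fromBlocks (U⁻¹ * S) (-(U * S⁻¹)) (0 : Matrix (Fin n) (Fin n) ℝ) 0)ᴴ =
        Matrix.fromBlocks (S * U⁻¹) 0 (-(S⁻¹ * U)) 0 := by
      rw [Matrix.fromBlocks_conjTranspose]
      have e1 : (U⁻¹ * S)ᴴ = S * U⁻¹ := by
        simp only [conjTranspose_eq_transpose_of_trivial, Matrix.transpose_mul,
          Matrix.transpose_nonsing_inv, hSsym, hUsym]
      have e2 : (-(U * S⁻¹))ᴴ = -(S⁻¹ * U) := by
        simp only [conjTranspose_eq_transpose_of_trivial, Matrix.transpose_neg,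
          Matrix.transpose_mul, Matrix.transpose_nonsing_inv, hSsym, hUsym]
      rw [e1, e2]
      simp
    have hGG : (Matrix.fromBlocks (U⁻¹ * S) (-(U * S⁻¹)) (0 : Matrix (Fin n) (Fin n) ℝ) 0)ᴴ *
        (Matrix.fromBlocks (U⁻¹ * S) (-(U * S⁻¹)) (0 : Matrix (Fin n) (Fin n) ℝ) 0) =
        Matrix.fromBlocks (S * T⁻¹ * S) (-1) (-1) (S⁻¹ * T * S⁻¹) := by
      rw [hGH, Matrix.fromBlocks_multiply]
      have e1 : (S * U⁻¹) * (U⁻¹ * S) + (0 : Matrix (Fin n) (Fin n) ℝ) * 0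
          = S * T⁻¹ * S := by
        rw [show (S * U⁻¹) * (U⁻¹ * S) = S * (U⁻¹ * U⁻¹) * S from by simp only [Matrix.mul_assoc],
          hUinv]
        simp
      have e2 : (S * U⁻¹) * (-(U * S⁻¹)) + (0 : Matrix (Fin n) (Fin n) ℝ) * 0 = -1 := by
        rw [Matrix.mul_neg, show (S * U⁻¹) * (U * S⁻¹) = S * (U⁻¹ * U) * S⁻¹ from by
          simp only [Matrix.mul_assoc], Matrix.nonsing_inv_mul _ hdU, Matrix.mul_one,
          Matrix.mul_nonsing_inv _ hdS]
        simp
      have e3 : (-(S⁻¹ * U)) * (U⁻¹ * S) + (0 : Matrix (Fin n) (Fin n) ℝ) * 0 = -1 := by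
        rw [Matrix.neg_mul, show (S⁻¹ * U) * (U⁻¹ * S) = S⁻¹ * (U * U⁻¹) * S from by
          simp only [Matrix.mul_assoc], Matrix.mul_nonsing_inv _ hdU, Matrix.mul_one,
          Matrix.nonsing_inv_mul _ hdS]
        simp
      have e4 : (-(S⁻¹ * U)) * (-(U * S⁻¹)) + (0 : Matrix (Fin n) (Fin n) ℝ) * 0
          = S⁻¹ * T * S⁻¹ := by
        rw [Matrix.neg_mul, Matrix.mul_neg, neg_neg, show (S⁻¹ * U) * (U * S⁻¹)
            = S⁻¹ * (U * U) * S⁻¹ from by simp only [Matrix.mul_assoc], hUU]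
        simp
      rw [e1, e2, e3, e4]
    rw [hGG, Matrix.fromBlocks_multiply, my_trace_fromBlocks] at h0tr
    simp only [Matrix.neg_mul, Matrix.one_mul, Matrix.trace_add, Matrix.trace_neg,
      Matrix.trace_transpose] at h0tr
    rw [htrR, htrS1] at h0tr
    linarith
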